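/- arXiv:1904.03504 — 2 statements merged into one kernel-verified Lean document; each statement's English description precedes it below -/
import Mathlib

section
/- Let f : X → Y be an almost isometry with constant C, let d_f(x,y) = inf_{x̃ ∈ X}(d_X(x,x̃) + C/2 + d_Y(f(x̃),y)), and let d ∈ D(X,Y) satisfy d(x,y) ≤ h(d_f(x,y)) for a monotone increasing function h : [0,∞) → [0,∞). Then there exists a constant K such that d(x,y) ≥ d_f(x,y) − K for all x ∈ X, y ∈ Y; in particular d and d_f are coarsely equivalent. (One can take K = C/2 + h(C/2).) -/
/-- A metric on `X ⊔ Y` extending the metrics of `X` and `Y`. -/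
structure GlueMetric (X Y : Type*) [MetricSpace X] [MetricSpace Y] where
  d : X → Y → ℝ
  nonneg : ∀ x y, 0 ≤ d x y
  tri₁ : ∀ x x' y, dist x x' ≤ d x y + d x' y
  tri₂ : ∀ x x' y, d x y ≤ dist x x' + d x' y
  tri₃ : ∀ x y y', dist y y' ≤ d x y + d x y'
  tri₄ : ∀ x y y', d x y ≤ d x y' + dist y' y

theorem df_is_maximal
    {X Y : Type*} [MetricSpace X] [MetricSpace Y] [Nonempty X]
    (f : X → Y) (C : ℝ) (hC : 0 < C)
    (hf : ∀ x x' : X, |dist (f x) (f x') - dist x x'| ≤ C)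
    (df : X → Y → ℝ)
    (hdf : ∀ x y, df x y = ⨅ x' : X, dist x x' + C / 2 + dist (f x') y)
    (D : GlueMetric X Y) (h : ℝ → ℝ) (hmono : Monotone h)
    (hdom : ∀ (x : X) (y : Y), D.d x y ≤ h (df x y)) :
    ∃ K : ℝ, K = C / 2 + h (C / 2) ∧
      ∀ (x : X) (y : Y), df x y - K ≤ D.d x y := by
  refine ⟨C / 2 + h (C / 2), rfl, fun x y => ?_⟩
  have hbdd : ∀ (x : X) (y : Y),
      BddBelow (Set.range fun x' : X => dist x x' + C / 2 + dist (f x') y) := by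
    intro x y
    exact ⟨0, by rintro _ ⟨x', rfl⟩; positivity⟩
  have h1 : df x y ≤ C / 2 + dist (f x) y := by
    rw [hdf]
    have := ciInf_le (hbdd x y) x
    simpa using this
  have h2 : df x (f x) ≤ C / 2 := by
    rw [hdf]
    have := ciInf_le (hbdd x (f x)) x
    simpa using this
  have h3 : D.d x (f x) ≤ h (C / 2) := (hdom x (f x)).trans (hmono h2)
  have h4 : dist (f x) y ≤ D.d x (f x) + D.d x y := D.tri₃ x (f x) y
  linarith
end

section
/- Let X ⊂ ℤ be given by X = {x_n : n ∈ ℤ}, where x_n = −2n for n ≤ 0, x_{2n} = 4n and x_{2n−1} = 4n − 3 for n > 0, with the metric inherited from ℤ. Then the map f : X → X defined by f(x_n) = x_{−n} is an almost isometry: there is a constant C with |d(f(x_n), f(x_m)) − d(x_n, x_m)| ≤ C for all n, m ∈ ℤ. -/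
/-- The sequence of points of `X ⊂ ℤ`: `x n = -2n` for `n ≤ 0`,
`x (2k) = 4k` and `x (2k-1) = 4k-3` for `n > 0`. -/
def xseq (n : ℤ) : ℤ :=
  if n ≤ 0 then -2 * n else if n % 2 = 0 then 2 * n else 2 * n - 1

theorem flip_is_almost_isometry :
    ∃ C > 0, ∀ n m : ℤ,
      |dist (xseq (-n)) (xseq (-m)) - dist (xseq n) (xseq m)| ≤ C := by
  have key : ∀ n m : ℤ, |(|xseq (-n) - xseq (-m)| - |xseq n - xseq m|)| ≤ 4 := by
    intro n m
    simp only [xseq]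
    split_ifs <;> simp only [Int.abs_eq_natAbs] <;> omega
  refine ⟨4, by norm_num, fun n m => ?_⟩
  have h := key n m
  rw [Int.dist_eq, Int.dist_eq]
  have h' : ((|(|xseq (-n) - xseq (-m)| - |xseq n - xseq m|)| : ℤ) : ℝ) ≤ 4 := by
    exact_mod_cast h
  push_cast at h'
  linarith [h', abs_nonneg ((|xseq (-n) - xseq (-m)| - |xseq n - xseq m| : ℤ) : ℝ)]
end
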